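/- Let n ≥ 1 and let t_0, t_1, …, t_n be integers with 1 = t_0 < t_1 < ⋯ < t_n. Define Δ = max_{1 ≤ s ≤ n} (t_s − t_0)/s (as a rational/real number). Then for all real numbers a_0 ≥ a_1 ≥ ⋯ ≥ a_{n−1} ≥ 1 one has a_0^{t_1−t_0} · a_1^{t_2−t_1} ⋯ a_{n−1}^{t_n−t_{n−1}} ≤ (a_0 a_1 ⋯ a_{n−1})^Δ. -/

import Mathlib

/-- Key real inequality: if `x` is nonneg and antitone on `range n` and the partial
sums of `c` satisfy `∑_{i<s} c i ≤ s·Δ` for `1 ≤ s ≤ n`, then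
`∑ c i * x i ≤ Δ * ∑ x i`. -/
lemma abel_key : ∀ (n : ℕ) (Δ : ℝ) (c x : ℕ → ℝ),
    (∀ i, i < n → 0 ≤ x i) → (∀ i, i + 1 < n → x (i + 1) ≤ x i) →
    (∀ s, 1 ≤ s → s ≤ n → ∑ i ∈ Finset.range s, c i ≤ (s : ℝ) * Δ) →
    ∑ i ∈ Finset.range n, c i * x i ≤ Δ * ∑ i ∈ Finset.range n, x i := by
  intro n
  induction n with
  | zero => intro Δ c x _ _ _; simp
  | succ n ih =>
    intro Δ c x hx0 hxm hE
    -- x is antitone on range (n+1)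
    have hchain : ∀ i j : ℕ, i ≤ j → j < n + 1 → x j ≤ x i := by
      intro i j hij hj
      induction j, hij using Nat.le_induction with
      | base => exact le_rfl
      | succ j hij ihj =>
        exact le_trans (hxm j hj) (ihj (Nat.lt_of_succ_lt hj))
    set b := x n with hb
    have hb0 : 0 ≤ b := hx0 n (Nat.lt_succ_self n)
    set y : ℕ → ℝ := fun i => x i - b with hy
    have hIH : ∑ i ∈ Finset.range n, c i * y i ≤ Δ * ∑ i ∈ Finset.range n, y i := by
      apply ih
      · intro i hi
        simp only [hy, sub_nonneg]
        exact hchain i n (Nat.le_of_lt hi) (Nat.lt_succ_self n)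
      · intro i hi
        simp only [hy]
        exact sub_le_sub_right (hxm i (Nat.lt_succ_of_lt hi)) b
      · intro s h1 h2
        exact hE s h1 (Nat.le_succ_of_le h2)
    have hEn : ∑ i ∈ Finset.range (n + 1), c i ≤ ((n : ℝ) + 1) * Δ := by
      have := hE (n + 1) (Nat.le_add_left 1 n) le_rfl
      push_cast at this ⊢; linarith
    have expand : ∑ i ∈ Finset.range (n + 1), c i * x i
        = ∑ i ∈ Finset.range n, c i * y i + (∑ i ∈ Finset.range (n + 1), c i) * b := by
      rw [Finset.sum_mul, Finset.sum_range_succ, Finset.sum_range_succ]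
      have : ∑ i ∈ Finset.range n, c i * x i
          = ∑ i ∈ Finset.range n, (c i * y i + c i * b) := by
        apply Finset.sum_congr rfl; intro i _; simp [hy]; ring
      rw [this, Finset.sum_add_distrib]; ring
    have sumx : ∑ i ∈ Finset.range (n + 1), x i
        = ∑ i ∈ Finset.range n, y i + ((n : ℝ) + 1) * b := by
      rw [Finset.sum_range_succ]
      have : ∑ i ∈ Finset.range n, x i
          = ∑ i ∈ Finset.range n, (y i + b) := by
        apply Finset.sum_congr rfl; intro i _; simp [hy]
      rw [this, Finset.sum_add_distrib, Finset.sum_const, Finset.card_range]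
      push_cast; ring
    calc ∑ i ∈ Finset.range (n + 1), c i * x i
        = ∑ i ∈ Finset.range n, c i * y i + (∑ i ∈ Finset.range (n + 1), c i) * b :=
          expand
      _ ≤ Δ * ∑ i ∈ Finset.range n, y i + (((n : ℝ) + 1) * Δ) * b := by
          gcongr
      _ = Δ * ∑ i ∈ Finset.range (n + 1), x i := by rw [sumx]; ring

/-- Exponent-rearrangement lemma (Lemma 3.1 of the paper): for strictly increasing
integers `1 = t 0 < t 1 < ⋯ < t n` and `Δ = max_{1 ≤ s ≤ n} (t s - t 0)/s`, and
reals `a 0 ≥ a 1 ≥ ⋯ ≥ a (n-1) ≥ 1`, one has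
`∏ i, (a i) ^ (t (i+1) - t i) ≤ (∏ i, a i) ^ Δ`. -/
theorem stmt_0 (n : ℕ) (hn : 1 ≤ n) (t : ℕ → ℤ) (ht0 : t 0 = 1)
    (htmono : ∀ i, i < n → t i < t (i + 1)) (Δ : ℝ)
    (hΔ : Δ = (Finset.Icc 1 n).sup' (Finset.nonempty_Icc.mpr hn)
      (fun s => ((t s - t 0 : ℤ) : ℝ) / (s : ℝ)))
    (a : ℕ → ℝ) (ha : ∀ i, i < n → 1 ≤ a i)
    (hamono : ∀ i, i + 1 < n → a (i + 1) ≤ a i) :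
    ∏ i ∈ Finset.range n, (a i) ^ ((t (i + 1) - t i : ℤ) : ℝ) ≤
      (∏ i ∈ Finset.range n, a i) ^ Δ := by
  have hapos : ∀ i, i < n → 0 < a i := fun i hi => lt_of_lt_of_le one_pos (ha i hi)
  have hprodpos : 0 < ∏ i ∈ Finset.range n, a i :=
    Finset.prod_pos (fun i hi => hapos i (Finset.mem_range.mp hi))
  have hLpos : 0 < ∏ i ∈ Finset.range n, (a i) ^ ((t (i + 1) - t i : ℤ) : ℝ) :=
    Finset.prod_pos (fun i hi => Real.rpow_pos_of_pos (hapos i (Finset.mem_range.mp hi)) _)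
  rw [← Real.log_le_log_iff hLpos (Real.rpow_pos_of_pos hprodpos Δ),
    Real.log_rpow hprodpos, Real.log_prod
      (fun i hi => ne_of_gt (Real.rpow_pos_of_pos (hapos i (Finset.mem_range.mp hi)) _)),
    Real.log_prod (fun i hi => ne_of_gt (hapos i (Finset.mem_range.mp hi)))]
  have hlog : ∀ i ∈ Finset.range n,
      Real.log ((a i) ^ ((t (i + 1) - t i : ℤ) : ℝ))
        = ((t (i + 1) - t i : ℤ) : ℝ) * Real.log (a i) := by
    intro i hi
    exact Real.log_rpow (hapos i (Finset.mem_range.mp hi)) _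
  rw [Finset.sum_congr rfl hlog]
  apply abel_key n Δ (fun i => ((t (i + 1) - t i : ℤ) : ℝ)) (fun i => Real.log (a i))
  · intro i hi; exact Real.log_nonneg (ha i hi)
  · intro i hi
    exact Real.log_le_log (hapos (i + 1) hi) (hamono i hi)
  · intro s h1 h2
    have htel : ∑ i ∈ Finset.range s, ((t (i + 1) - t i : ℤ) : ℝ)
        = ((t s - t 0 : ℤ) : ℝ) := by
      push_cast
      exact Finset.sum_range_sub (fun i => ((t i : ℝ))) s
    rw [htel]
    have hle : ((t s - t 0 : ℤ) : ℝ) / (s : ℝ) ≤ Δ := by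
      rw [hΔ]
      exact Finset.le_sup' (fun s => ((t s - t 0 : ℤ) : ℝ) / (s : ℝ)) (Finset.mem_Icc.mpr ⟨h1, h2⟩)
    have hs : (0 : ℝ) < s := by exact_mod_cast h1
    rw [div_le_iff₀ hs] at hle
    linarith
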